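/- The function x ↦ f₀(x) + x²/2 is convex on ℝ, where f₀ is the regularized double-well potential; equivalently, f₀''(x) ≥ −1 for all x. -/

import Mathlib

/-- The regularized Landau–Lifshitz double-well potential with cutoff parameter `K`. -/
noncomputable def f0 (K c : ℝ) : ℝ :=
  if K < c then (3*K^2 - 1)/2 * c^2 - 2*K^3*c + (3*K^4 + 1)/4
  else if c < -K then (3*K^2 - 1)/2 * c^2 + 2*K^3*c + (3*K^4 + 1)/4
  else ((c^2 - 1)^2)/4

noncomputable def g1 (K c : ℝ) : ℝ :=
  if K < c then (3*K^2 - 1)*c - 2*K^3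
  else if c < -K then (3*K^2 - 1)*c + 2*K^3
  else c^3 - c

noncomputable def g2 (K c : ℝ) : ℝ :=
  if K < c then 3*K^2 - 1
  else if c < -K then 3*K^2 - 1
  else 3*c^2 - 1

section
variable (K : ℝ)

lemma hp1 (x : ℝ) : HasDerivAt (fun c : ℝ => (3*K^2 - 1)/2 * c^2 - 2*K^3*c + (3*K^4 + 1)/4)
    ((3*K^2 - 1)*x - 2*K^3) x := by
  have h := (((hasDerivAt_pow 2 x).const_mul ((3*K^2-1)/2)).sub
    ((hasDerivAt_id x).const_mul (2*K^3))).add_const ((3*K^4+1)/4)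
  refine h.congr_deriv ?_
  ring

lemma hp2 (x : ℝ) : HasDerivAt (fun c : ℝ => (3*K^2 - 1)/2 * c^2 + 2*K^3*c + (3*K^4 + 1)/4)
    ((3*K^2 - 1)*x + 2*K^3) x := by
  have h := (((hasDerivAt_pow 2 x).const_mul ((3*K^2-1)/2)).add
    ((hasDerivAt_id x).const_mul (2*K^3))).add_const ((3*K^4+1)/4)
  refine h.congr_deriv ?_
  ring

lemma hq (x : ℝ) : HasDerivAt (fun c : ℝ => ((c^2 - 1)^2)/4) (x^3 - x) x := by
  have h : HasDerivAt (fun c : ℝ => ((c^2 - 1)^2)/4)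
      ((↑2 * (x^2-1)^(2-1) * (↑2 * x^(2-1))) / 4) x :=
    (((hasDerivAt_pow 2 x).sub_const 1).pow 2).div_const 4
  convert h using 1
  push_cast
  ring

lemma hl1 (x : ℝ) : HasDerivAt (fun c : ℝ => (3*K^2 - 1)*c - 2*K^3) (3*K^2 - 1) x := by
  simpa using ((hasDerivAt_id x).const_mul (3*K^2-1)).sub_const (2*K^3)

lemma hl2 (x : ℝ) : HasDerivAt (fun c : ℝ => (3*K^2 - 1)*c + 2*K^3) (3*K^2 - 1) x := by
  simpa using ((hasDerivAt_id x).const_mul (3*K^2-1)).add_const (2*K^3)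

lemma hcub (x : ℝ) : HasDerivAt (fun c : ℝ => c^3 - c) (3*x^2 - 1) x := by
  have h := (hasDerivAt_pow 3 x).sub (hasDerivAt_id x)
  refine h.congr_deriv ?_
  all_goals (push_cast; ring)

end

lemma f0_eq_mid (K c : ℝ) (h1 : ¬ K < c) (h2 : ¬ c < -K) : f0 K c = ((c^2 - 1)^2)/4 := by
  rw [f0, if_neg h1, if_neg h2]

lemma g1_eq_mid (K c : ℝ) (h1 : ¬ K < c) (h2 : ¬ c < -K) : g1 K c = c^3 - c := by
  rw [g1, if_neg h1, if_neg h2]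

lemma g2_eq_mid (K c : ℝ) (h1 : ¬ K < c) (h2 : ¬ c < -K) : g2 K c = 3*c^2 - 1 := by
  rw [g2, if_neg h1, if_neg h2]

lemma f0_hasDeriv (K : ℝ) (hK : 1 ≤ K) (x : ℝ) : HasDerivAt (f0 K) (g1 K x) x := by
  have hK0 : (0:ℝ) < K := lt_of_lt_of_le one_pos hK
  rcases lt_trichotomy x K with hxK | hxK | hxK
  · rcases lt_trichotomy x (-K) with hxK' | hxK' | hxK'
    · -- x < -K
      have he : f0 K =ᶠ[nhds x] (fun c : ℝ => (3*K^2 - 1)/2 * c^2 + 2*K^3*c + (3*K^4 + 1)/4) := by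
        filter_upwards [Iio_mem_nhds hxK'] with c hc
        have hc' : c < -K := hc
        rw [f0, if_neg (by linarith), if_pos hc']
      rw [g1, if_neg (by linarith), if_pos hxK']
      exact (hp2 K x).congr_of_eventuallyEq he
    · -- x = -K
      subst hxK'
      have hg : g1 K (-K) = (-K)^3 - (-K) := g1_eq_mid K (-K) (by linarith) (by linarith)
      have hleft : HasDerivWithinAt (f0 K) (g1 K (-K)) (Set.Iic (-K)) (-K) := by
        have hd : HasDerivWithinAt (fun c : ℝ => (3*K^2 - 1)/2 * c^2 + 2*K^3*c + (3*K^4 + 1)/4)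
            ((3*K^2 - 1)*(-K) + 2*K^3) (Set.Iic (-K)) (-K) := (hp2 K (-K)).hasDerivWithinAt
        have : ((3*K^2 - 1)*(-K) + 2*K^3) = g1 K (-K) := by rw [hg]; ring
        rw [← this]
        apply hd.congr_of_mem _ (Set.mem_Iic.mpr le_rfl)
        intro c hc
        rcases lt_or_eq_of_le (Set.mem_Iic.mp hc) with h | h
        · rw [f0, if_neg (by linarith), if_pos h]
        · subst h
          rw [f0_eq_mid K (-K) (by linarith) (by linarith)]
          ring
      have hright : HasDerivWithinAt (f0 K) (g1 K (-K)) (Set.Ici (-K)) (-K) := by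
        rw [hg]
        have hd : HasDerivWithinAt (fun c : ℝ => ((c^2 - 1)^2)/4)
            ((-K)^3 - (-K)) (Set.Ici (-K)) (-K) := (hq (-K)).hasDerivWithinAt
        apply hd.congr_of_eventuallyEq _ (f0_eq_mid K (-K) (by linarith) (by linarith))
        filter_upwards [mem_nhdsWithin_of_mem_nhds (Iio_mem_nhds (by linarith : -K < K)),
          self_mem_nhdsWithin] with c hc1 hc2
        exact f0_eq_mid K c (by exact not_lt.mpr hc1.le) (not_lt.mpr hc2)
      have := (hleft.union hright)
      rw [Set.Iic_union_Ici] at this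
      exact hasDerivWithinAt_univ.mp this
    · -- -K < x < K
      have he : f0 K =ᶠ[nhds x] (fun c : ℝ => ((c^2 - 1)^2)/4) := by
        filter_upwards [Ioo_mem_nhds hxK' hxK] with c hc
        exact f0_eq_mid K c (not_lt.mpr hc.2.le) (not_lt.mpr hc.1.le)
      rw [g1_eq_mid K x (by linarith) (by linarith)]
      exact (hq x).congr_of_eventuallyEq he
  · -- x = K
    rw [hxK]
    have hg : g1 K K = K^3 - K := g1_eq_mid K K (lt_irrefl K) (by linarith)
    have hleft : HasDerivWithinAt (f0 K) (g1 K K) (Set.Iic K) K := by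
      rw [hg]
      have hd : HasDerivWithinAt (fun c : ℝ => ((c^2 - 1)^2)/4)
          (K^3 - K) (Set.Iic K) K := (hq K).hasDerivWithinAt
      apply hd.congr_of_eventuallyEq _ (f0_eq_mid K K (lt_irrefl K) (by linarith))
      filter_upwards [mem_nhdsWithin_of_mem_nhds (Ioi_mem_nhds (by linarith : -K < K)),
        self_mem_nhdsWithin] with c hc1 hc2
      exact f0_eq_mid K c (not_lt.mpr hc2) (not_lt.mpr (Set.mem_Ioi.mp hc1).le)
    have hright : HasDerivWithinAt (f0 K) (g1 K K) (Set.Ici K) K := by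
      have hd : HasDerivWithinAt (fun c : ℝ => (3*K^2 - 1)/2 * c^2 - 2*K^3*c + (3*K^4 + 1)/4)
          ((3*K^2 - 1)*K - 2*K^3) (Set.Ici K) K := (hp1 K K).hasDerivWithinAt
      have : ((3*K^2 - 1)*K - 2*K^3) = g1 K K := by rw [hg]; ring
      rw [← this]
      apply hd.congr_of_mem _ (Set.mem_Ici.mpr le_rfl)
      intro c hc
      rcases lt_or_eq_of_le (Set.mem_Ici.mp hc) with h | h
      · rw [f0, if_pos h]
      · subst h
        rw [f0_eq_mid K K (lt_irrefl K) (by linarith)]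
        ring
    have := (hleft.union hright)
    rw [Set.Iic_union_Ici] at this
    exact hasDerivWithinAt_univ.mp this
  · -- K < x
    have he : f0 K =ᶠ[nhds x] (fun c : ℝ => (3*K^2 - 1)/2 * c^2 - 2*K^3*c + (3*K^4 + 1)/4) := by
      filter_upwards [Ioi_mem_nhds hxK] with c hc
      rw [f0, if_pos (Set.mem_Ioi.mp hc)]
    rw [g1, if_pos hxK]
    exact (hp1 K x).congr_of_eventuallyEq he

lemma g1_hasDeriv (K : ℝ) (hK : 1 ≤ K) (x : ℝ) : HasDerivAt (g1 K) (g2 K x) x := by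
  have hK0 : (0:ℝ) < K := lt_of_lt_of_le one_pos hK
  rcases lt_trichotomy x K with hxK | hxK | hxK
  · rcases lt_trichotomy x (-K) with hxK' | hxK' | hxK'
    · have he : g1 K =ᶠ[nhds x] (fun c : ℝ => (3*K^2 - 1)*c + 2*K^3) := by
        filter_upwards [Iio_mem_nhds hxK'] with c hc
        have hc' : c < -K := hc
        rw [g1, if_neg (by linarith), if_pos hc']
      rw [g2, if_neg (by linarith), if_pos hxK']
      exact (hl2 K x).congr_of_eventuallyEq he
    · subst hxK'
      have hg : g2 K (-K) = 3*(-K)^2 - 1 := g2_eq_mid K (-K) (by linarith) (by linarith)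
      have hleft : HasDerivWithinAt (g1 K) (g2 K (-K)) (Set.Iic (-K)) (-K) := by
        have hd : HasDerivWithinAt (fun c : ℝ => (3*K^2 - 1)*c + 2*K^3)
            (3*K^2 - 1) (Set.Iic (-K)) (-K) := (hl2 K (-K)).hasDerivWithinAt
        have : (3*K^2 - 1) = g2 K (-K) := by rw [hg]; ring
        rw [← this]
        apply hd.congr_of_mem _ (Set.mem_Iic.mpr le_rfl)
        intro c hc
        rcases lt_or_eq_of_le (Set.mem_Iic.mp hc) with h | h
        · rw [g1, if_neg (by linarith), if_pos h]
        · subst h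
          rw [g1_eq_mid K (-K) (by linarith) (by linarith)]
          ring
      have hright : HasDerivWithinAt (g1 K) (g2 K (-K)) (Set.Ici (-K)) (-K) := by
        rw [hg]
        have hd : HasDerivWithinAt (fun c : ℝ => c^3 - c)
            (3*(-K)^2 - 1) (Set.Ici (-K)) (-K) := (hcub (-K)).hasDerivWithinAt
        apply hd.congr_of_eventuallyEq _ (g1_eq_mid K (-K) (by linarith) (by linarith))
        filter_upwards [mem_nhdsWithin_of_mem_nhds (Iio_mem_nhds (by linarith : -K < K)),
          self_mem_nhdsWithin] with c hc1 hc2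
        exact g1_eq_mid K c (not_lt.mpr hc1.le) (not_lt.mpr hc2)
      have := (hleft.union hright)
      rw [Set.Iic_union_Ici] at this
      exact hasDerivWithinAt_univ.mp this
    · have he : g1 K =ᶠ[nhds x] (fun c : ℝ => c^3 - c) := by
        filter_upwards [Ioo_mem_nhds hxK' hxK] with c hc
        exact g1_eq_mid K c (not_lt.mpr hc.2.le) (not_lt.mpr hc.1.le)
      rw [g2_eq_mid K x (by linarith) (by linarith)]
      exact (hcub x).congr_of_eventuallyEq he
  · rw [hxK]
    have hg : g2 K K = 3*K^2 - 1 := g2_eq_mid K K (lt_irrefl K) (by linarith)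
    have hleft : HasDerivWithinAt (g1 K) (g2 K K) (Set.Iic K) K := by
      rw [hg]
      have : (3*K^2 - 1 : ℝ) = 3*K^2 - 1 := rfl
      have hd : HasDerivWithinAt (fun c : ℝ => c^3 - c)
          (3*K^2 - 1) (Set.Iic K) K := (hcub K).hasDerivWithinAt
      apply hd.congr_of_eventuallyEq _ (g1_eq_mid K K (lt_irrefl K) (by linarith))
      filter_upwards [mem_nhdsWithin_of_mem_nhds (Ioi_mem_nhds (by linarith : -K < K)),
        self_mem_nhdsWithin] with c hc1 hc2
      exact g1_eq_mid K c (not_lt.mpr hc2) (not_lt.mpr (Set.mem_Ioi.mp hc1).le)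
    have hright : HasDerivWithinAt (g1 K) (g2 K K) (Set.Ici K) K := by
      rw [hg]
      have hd : HasDerivWithinAt (fun c : ℝ => (3*K^2 - 1)*c - 2*K^3)
          (3*K^2 - 1) (Set.Ici K) K := (hl1 K K).hasDerivWithinAt
      apply hd.congr_of_mem _ (Set.mem_Ici.mpr le_rfl)
      intro c hc
      rcases lt_or_eq_of_le (Set.mem_Ici.mp hc) with h | h
      · rw [g1, if_pos h]
      · subst h
        rw [g1_eq_mid K K (lt_irrefl K) (by linarith)]
        ring
    have := (hleft.union hright)
    rw [Set.Iic_union_Ici] at this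
    exact hasDerivWithinAt_univ.mp this
  · have he : g1 K =ᶠ[nhds x] (fun c : ℝ => (3*K^2 - 1)*c - 2*K^3) := by
      filter_upwards [Ioi_mem_nhds hxK] with c hc
      rw [g1, if_pos (Set.mem_Ioi.mp hc)]
    rw [g2, if_pos hxK]
    exact (hl1 K x).congr_of_eventuallyEq he

lemma g2_ge (K : ℝ) (hK : 1 ≤ K) (x : ℝ) : -1 ≤ g2 K x := by
  rw [g2]
  split_ifs <;> nlinarith

/-- The function `x ↦ f0 K x + x²/2` is convex on ℝ; equivalently, the second derivative
of `f0 K` is bounded below by `−1`. -/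
theorem f0_add_sq_convex (K : ℝ) (hK : 1 ≤ K) :
    ConvexOn ℝ Set.univ (fun x : ℝ => f0 K x + x^2/2) ∧
    (∀ x : ℝ, -1 ≤ deriv (deriv (f0 K)) x) := by
  have hd1 : deriv (f0 K) = g1 K := funext fun x => (f0_hasDeriv K hK x).deriv
  have hd2 : deriv (g1 K) = g2 K := funext fun x => (g1_hasDeriv K hK x).deriv
  constructor
  · have hF : ∀ x : ℝ, HasDerivAt (fun x : ℝ => f0 K x + x^2/2) (g1 K x + x) x := by
      intro x
      have h2 : HasDerivAt (fun x : ℝ => x^2/2) x x := by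
        have := (hasDerivAt_pow 2 x).div_const 2
        refine this.congr_deriv ?_
        push_cast; ring
      exact (f0_hasDeriv K hK x).add h2
    have hdF : deriv (fun x : ℝ => f0 K x + x^2/2) = fun x => g1 K x + x :=
      funext fun x => (hF x).deriv
    apply Monotone.convexOn_univ_of_deriv (fun x => (hF x).differentiableAt)
    rw [hdF]
    have hdiff : Differentiable ℝ (fun x => g1 K x + x) :=
      fun x => ((g1_hasDeriv K hK x).add (hasDerivAt_id x)).differentiableAt
    apply monotone_of_deriv_nonneg hdiff
    intro x
    have : deriv (fun x => g1 K x + x) x = g2 K x + 1 :=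
      ((g1_hasDeriv K hK x).add (hasDerivAt_id x)).deriv
    rw [this]
    linarith [g2_ge K hK x]
  · intro x
    rw [hd1, hd2]
    exact g2_ge K hK x
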